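/- Let n ≥ 2 be a natural number. Then for any nonnegative real numbers x_1, ..., x_n, (x_1 + ... + x_n)/n - (x_1 x_2 ... x_n)^(1/n) ≥ (1/(n(n-1))) ∑_{1 ≤ i < j ≤ n} (√(x_i) - √(x_j))^2. -/

import Mathlib

open Finset Real

private lemma swap_sum {n : ℕ} (g : Fin n → Fin n → ℝ) :
    ∑ i, ∑ j ∈ Finset.Iio i, g i j = ∑ j, ∑ i ∈ Finset.Ioi j, g i j := by
  rw [Finset.sum_sigma', Finset.sum_sigma']
  exact Finset.sum_nbij' (fun p => ⟨p.2, p.1⟩) (fun p => ⟨p.2, p.1⟩)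
    (by simp) (by simp) (by simp) (by simp) (by simp)

/-- The identity `∑_{i<j} (a i - a j)^2 = n * ∑ a i ^ 2 - (∑ a i)^2`. -/
private lemma sum_Ioi_sq_sub {n : ℕ} (a : Fin n → ℝ) :
    ∑ i, ∑ j ∈ Finset.Ioi i, (a i - a j) ^ 2
      = (n : ℝ) * ∑ i, (a i) ^ 2 - (∑ i, a i) ^ 2 := by
  have hfull : ∑ i, ∑ j, (a i - a j) ^ 2
      = 2 * ((n : ℝ) * ∑ i, (a i) ^ 2 - (∑ i, a i) ^ 2) := by
    simp only [sub_sq, Finset.sum_add_distrib, Finset.sum_sub_distrib, Finset.sum_const,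
      Finset.card_univ, Fintype.card_fin, ← Finset.sum_mul, ← Finset.mul_sum, nsmul_eq_mul]
    ring
  have hsplit : ∀ i : Fin n, ∑ j, (a i - a j) ^ 2
      = (∑ j ∈ Finset.Iio i, (a i - a j) ^ 2) + ∑ j ∈ Finset.Ioi i, (a i - a j) ^ 2 := by
    intro i
    have : (Finset.univ : Finset (Fin n)) = (Finset.Iio i) ∪ ({i} ∪ Finset.Ioi i) := by
      ext j; simp [lt_or_eq_of_le, or_comm, lt_or_gt_of_ne, eq_comm]
      rcases lt_trichotomy j i with h | h | h <;> [tauto; exact Or.inl h.ge; exact Or.inl h.le]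
    rw [this, Finset.sum_union, Finset.sum_union] <;>
      simp [Finset.disjoint_left] <;> intros <;> omega
  have hIio : ∑ i, ∑ j ∈ Finset.Iio i, (a i - a j) ^ 2
      = ∑ i, ∑ j ∈ Finset.Ioi i, (a i - a j) ^ 2 := by
    rw [swap_sum]
    apply Finset.sum_congr rfl; intro i _
    apply Finset.sum_congr rfl; intro j _; ring
  have := Finset.sum_congr rfl (fun i (_ : i ∈ Finset.univ) => hsplit i)
  rw [hfull] at this
  rw [Finset.sum_add_distrib, hIio] at this
  linarith

/-- Second strong Cauchy inequality (3.1): for `n ≥ 2` and nonnegative `x i`,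
`(x_1 + ⋯ + x_n)/n - (x_1 ⋯ x_n)^(1/n) ≥ (1/(n(n-1))) ∑_{i < j} (√(x i) - √(x j))^2`. -/
theorem second_strong_cauchy (n : ℕ) (hn : 2 ≤ n) (x : Fin n → ℝ) (hx : ∀ i, 0 ≤ x i) :
    (∑ i, x i) / n - (∏ i, x i) ^ ((1 : ℝ) / n) ≥
      (1 / (n * (n - 1)) : ℝ) *
        ∑ i, ∑ j ∈ Finset.Ioi i, (Real.sqrt (x i) - Real.sqrt (x j)) ^ 2 := by
  set N : ℝ := (n : ℝ) with hN
  have hN2 : (2 : ℝ) ≤ N := by rw [hN]; exact_mod_cast hn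
  have hNpos : 0 < N := by linarith
  have hN1pos : 0 < N - 1 := by linarith
  set A : ℝ := ∑ i, x i with hA
  set S : ℝ := ∑ i, Real.sqrt (x i) with hS
  set P : ℝ := ∏ i, x i with hP
  set s : Finset (Fin n × Fin n) := (Finset.univ : Finset (Fin n)).offDiag with hs
  -- the sum over the off-diagonal
  have hQ : ∑ p ∈ s, Real.sqrt (x p.1) * Real.sqrt (x p.2) = S ^ 2 - A := by
    have hun : ∑ p ∈ (Finset.univ : Finset (Fin n)).diag,
          Real.sqrt (x p.1) * Real.sqrt (x p.2)
        + ∑ p ∈ s, Real.sqrt (x p.1) * Real.sqrt (x p.2)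
        = ∑ p ∈ Finset.univ ×ˢ Finset.univ, Real.sqrt (x p.1) * Real.sqrt (x p.2) := by
      rw [← Finset.sum_union (Finset.disjoint_diag_offDiag _), Finset.diag_union_offDiag]
    have hdiag : ∑ p ∈ (Finset.univ : Finset (Fin n)).diag,
        Real.sqrt (x p.1) * Real.sqrt (x p.2) = A := by
      rw [hA]
      refine Finset.sum_nbij' (fun p => p.1) (fun i => (i, i)) (by simp) (by simp)
        (by rintro ⟨a, b⟩ h; simp only [Finset.mem_diag] at h; simp [h.2]) (by simp) ?_
      rintro ⟨a, b⟩ h; simp only [Finset.mem_diag] at h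
      rw [← h.2, Real.mul_self_sqrt (hx a)]
    have hprodsum : ∑ p ∈ Finset.univ ×ˢ Finset.univ,
        Real.sqrt (x p.1) * Real.sqrt (x p.2) = S ^ 2 := by
      rw [Finset.sum_product]
      simp only [← Finset.mul_sum, ← Finset.sum_mul, hS]; ring
    linarith [hun, hdiag, hprodsum]
  have hQnonneg : 0 ≤ ∑ p ∈ s, Real.sqrt (x p.1) * Real.sqrt (x p.2) :=
    Finset.sum_nonneg fun p _ => mul_nonneg (Real.sqrt_nonneg _) (Real.sqrt_nonneg _)
  -- AM-GM: P^(1/n) ≤ (S^2 - A)/(N(N-1))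
  have hPnonneg : 0 ≤ P := Finset.prod_nonneg fun i _ => hx i
  have key : P ^ ((1 : ℝ) / n) ≤ (1 / (N * (N - 1))) * (S ^ 2 - A) := by
    rw [← hQ]
    rcases eq_or_lt_of_le hPnonneg with h0 | hPpos
    · rw [← h0, Real.zero_rpow (by positivity)]
      positivity
    · have hcard : (s.card : ℝ) = N * (N - 1) := by
        rw [hs, Finset.offDiag_card, Finset.card_univ, Fintype.card_fin]
        have h1 : n ≤ n * n := Nat.le_mul_of_pos_left n (by omega)
        push_cast [Nat.cast_sub h1]
        ring
      have hamgm := Real.geom_mean_le_arith_mean_weighted s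
        (fun _ => 1 / (N * (N - 1))) (fun p => Real.sqrt (x p.1) * Real.sqrt (x p.2))
        (fun i _ => by positivity)
        (by rw [Finset.sum_const, nsmul_eq_mul, hcard]; field_simp)
        (fun p _ => mul_nonneg (Real.sqrt_nonneg _) (Real.sqrt_nonneg _))
      -- compute the product side
      have hxpos : ∀ i, 0 < x i := by
        intro i
        rcases (hx i).lt_or_eq with h | h
        · exact h
        · exfalso
          have : P = 0 := Finset.prod_eq_zero (Finset.mem_univ i) h.symm
          rw [this] at hPpos; exact lt_irrefl 0 hPpos
      have hprodall : ∏ p ∈ Finset.univ ×ˢ Finset.univ,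
          Real.sqrt (x p.1) * Real.sqrt (x p.2) = P ^ n := by
        rw [Finset.prod_product]
        have hsq : (∏ i, Real.sqrt (x i)) ^ 2 = P := by
          rw [← Finset.prod_pow]
          rw [hP]
          exact Finset.prod_congr rfl fun i _ => Real.sq_sqrt (hx i)
        calc ∏ i, ∏ j, Real.sqrt (x i) * Real.sqrt (x j)
            = ∏ i, (Real.sqrt (x i) ^ n * ∏ j, Real.sqrt (x j)) := by
              apply Finset.prod_congr rfl; intro i _
              rw [Finset.prod_mul_distrib, Finset.prod_const, Finset.card_univ,
                Fintype.card_fin]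
          _ = ((∏ i, Real.sqrt (x i)) ^ 2) ^ n := by
              rw [Finset.prod_mul_distrib, Finset.prod_pow, Finset.prod_const,
                Finset.card_univ, Fintype.card_fin, ← pow_add, ← pow_mul, two_mul]
          _ = P ^ n := by rw [hsq]
      have hproddiag : ∏ p ∈ (Finset.univ : Finset (Fin n)).diag,
          Real.sqrt (x p.1) * Real.sqrt (x p.2) = P := by
        rw [hP]
        refine Finset.prod_nbij' (fun p => p.1) (fun i => (i, i)) (by simp) (by simp)
          (by rintro ⟨a, b⟩ h; simp only [Finset.mem_diag] at h; simp [h.2]) (by simp) ?_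
        rintro ⟨a, b⟩ h; simp only [Finset.mem_diag] at h
        rw [← h.2, Real.mul_self_sqrt (hx a)]
      have hprodoff : ∏ p ∈ s, Real.sqrt (x p.1) * Real.sqrt (x p.2) = P ^ (n - 1) := by
        have hun : (∏ p ∈ (Finset.univ : Finset (Fin n)).diag,
              Real.sqrt (x p.1) * Real.sqrt (x p.2))
            * ∏ p ∈ s, Real.sqrt (x p.1) * Real.sqrt (x p.2)
            = ∏ p ∈ Finset.univ ×ˢ Finset.univ, Real.sqrt (x p.1) * Real.sqrt (x p.2) := by
          rw [← Finset.prod_union (Finset.disjoint_diag_offDiag _), Finset.diag_union_offDiag]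
        rw [hproddiag, hprodall] at hun
        have hpow : P ^ n = P ^ (n - 1) * P := by
          rw [← pow_succ, Nat.sub_add_cancel (by omega)]
        rw [hpow] at hun
        have := mul_left_cancel₀ (ne_of_gt hPpos) (by linarith [hun] : P * (∏ p ∈ s,
          Real.sqrt (x p.1) * Real.sqrt (x p.2)) = P * P ^ (n - 1))
        linarith [this]
      -- the LHS product of rpow's
      have hlhs : ∏ p ∈ s, (Real.sqrt (x p.1) * Real.sqrt (x p.2)) ^ (1 / (N * (N - 1)))
          = P ^ ((1 : ℝ) / n) := by
        rw [Real.finset_prod_rpow s _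
          (fun p _ => mul_nonneg (Real.sqrt_nonneg _) (Real.sqrt_nonneg _)) _, hprodoff]
        rw [← Real.rpow_natCast P (n - 1), ← Real.rpow_mul hPnonneg]
        congr 1
        have : ((n - 1 : ℕ) : ℝ) = N - 1 := by
          push_cast [Nat.cast_sub (by omega : 1 ≤ n)]; ring
        rw [this]
        field_simp
        rw [← hN]
      rw [hlhs] at hamgm
      calc P ^ ((1:ℝ)/n) ≤ ∑ p ∈ s, (1 / (N * (N - 1))) *
            (Real.sqrt (x p.1) * Real.sqrt (x p.2)) := hamgm
        _ = (1 / (N * (N - 1))) * ∑ p ∈ s, Real.sqrt (x p.1) * Real.sqrt (x p.2) := by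
            rw [Finset.mul_sum]
  -- the sum identity
  have hsum : ∑ i, ∑ j ∈ Finset.Ioi i, (Real.sqrt (x i) - Real.sqrt (x j)) ^ 2
      = N * A - S ^ 2 := by
    rw [sum_Ioi_sq_sub (fun i => Real.sqrt (x i))]
    congr 1
    rw [hA]
    congr 1
    exact Finset.sum_congr rfl fun i _ => Real.sq_sqrt (hx i)
  rw [ge_iff_le, hsum]
  have hid : A / N = (1 / (N * (N - 1))) * ((N * A - S ^ 2) + (S ^ 2 - A)) := by
    field_simp
    ring
  have hmul : 0 < 1 / (N * (N - 1)) := by positivity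
  nlinarith [key, hid, mul_pos hNpos hN1pos]
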